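/- For every n ≥ 1 and all nonzero finitely supported x, x′ ∈ ℓ², the following estimate holds: |Σ_{k=0}^{n−1} (−1)^k Σ_i (KP^{n−1−k} x)(i) · (KP^k x′)(i)| ≤ 2^{n−1} · ‖x‖₂ · ‖x′‖₂. -/

import Mathlib

open Filter Topology

noncomputable section

/-- The ℓ² norm of a complex sequence (junk value if not square-summable). -/
def l2norm (x : ℕ → ℂ) : ℝ := Real.sqrt (∑' i, ‖x i‖ ^ 2)

/-- The Kalton–Peck map `KP^k`: its `i`-th entry is
`(2^k/k!) · xᵢ · (log(|xᵢ|/‖x‖₂))^k` when `x ≠ 0` and `xᵢ ≠ 0`, and `0` otherwise. -/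
def KP (k : ℕ) (x : ℕ → ℂ) : ℕ → ℂ := fun i =>
  letI := Classical.propDecidable (x = 0 ∨ x i = 0)
  if x = 0 ∨ x i = 0 then 0
  else (((2 : ℝ) ^ k / (Nat.factorial k : ℝ) *
      (Real.log (‖x i‖ / l2norm x)) ^ k : ℝ) : ℂ) * x i

/-- The reduced tuple `(x₁ − KP^{n−1} xₙ, …, x_{n−1} − KP¹ xₙ)`
(0-indexed, tuples of length `n+2` reduce to length `n+1`). -/
def reduceZ (n : ℕ) (x : Fin (n + 2) → ℕ → ℂ) : Fin (n + 1) → ℕ → ℂ :=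
  fun j => x j.castSucc - KP (n + 1 - (j : ℕ)) (x (Fin.last (n + 1)))

/-- Membership in the Rochberg space `𝔷_{n+1}` (tuples of length `n+1`). -/
def MemZ : (n : ℕ) → (Fin (n + 1) → ℕ → ℂ) → Prop
  | 0, x => Memℓp (x 0) 2
  | n + 1, x => Memℓp (x (Fin.last (n + 1))) 2 ∧ MemZ n (reduceZ n x)

/-- The natural quasinorm of the Rochberg space `𝔷_{n+1}`. -/
def QnormZ : (n : ℕ) → (Fin (n + 1) → ℕ → ℂ) → ℝ
  | 0, x => l2norm (x 0)
  | n + 1, x => QnormZ n (reduceZ n x) + l2norm (x (Fin.last (n + 1)))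

/-- A realization of the Rochberg space `𝔷_{n+1}` as a (complex) normed space `Z`:
a linear bijection onto the set of tuples belonging to `𝔷_{n+1}`, whose norm is
equivalent to the natural quasinorm. -/
structure RochbergRep (n : ℕ) (Z : Type*) [NormedAddCommGroup Z] [NormedSpace ℂ Z] where
  toFun : Z →ₗ[ℂ] (Fin (n + 1) → ℕ → ℂ)
  inj : Function.Injective toFun
  range_eq : Set.range toFun = {x | MemZ n x}
  C : ℝ
  one_le_C : 1 ≤ C
  norm_le : ∀ z, ‖z‖ ≤ C * QnormZ n (toFun z)
  qnorm_le : ∀ z, QnormZ n (toFun z) ≤ C * ‖z‖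

/-- A tuple is finitely supported if all its coordinate sequences are. -/
def FinSuppZ (n : ℕ) (x : Fin (n + 1) → ℕ → ℂ) : Prop :=
  ∀ j, (Function.support (x j)).Finite

/-- The pairing `⟨x,y⟩ₙ = Σ_{i+j=n+1} (−1)^i Σ_m x_i(m)·y_j(m)` (0-indexed form). -/
def pairZ (n : ℕ) (x y : Fin (n + 1) → ℕ → ℂ) : ℂ :=
  ∑ i : Fin (n + 1), (-1 : ℂ) ^ ((i : ℕ) + 1) * ∑ᶠ m, x i m * y i.rev m

/-- The tuple `(0,…,0,x)`. -/
def padLast (n : ℕ) (x : ℕ → ℂ) : Fin (n + 1) → ℕ → ℂ :=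
  fun j => if j = Fin.last n then x else 0

/-- `x ∈ Dom_{n+1}`, i.e. `(0,…,0,x) ∈ 𝔷_{n+1}`. -/
def MemDom (n : ℕ) (x : ℕ → ℂ) : Prop := MemZ n (padLast n x)

/-- The natural quasinorm of `Dom_{n+1}`: `‖(0,…,0,x)‖_{𝔷_{n+1}}`. -/
def DomQnorm (n : ℕ) (x : ℕ → ℂ) : ℝ := QnormZ n (padLast n x)

/-- A realization of `Dom_{n+1}` as a normed space. -/
structure DomRep (n : ℕ) (D : Type*) [NormedAddCommGroup D] [NormedSpace ℂ D] where
  toFun : D →ₗ[ℂ] (ℕ → ℂ)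
  inj : Function.Injective toFun
  range_eq : Set.range toFun = {x | MemDom n x}
  C : ℝ
  one_le_C : 1 ≤ C
  norm_le : ∀ z, ‖z‖ ≤ C * DomQnorm n (toFun z)
  qnorm_le : ∀ z, DomQnorm n (toFun z) ≤ C * ‖z‖

section Ops

variable {X Y : Type*} [NormedAddCommGroup X] [NormedSpace ℂ X]
  [NormedAddCommGroup Y] [NormedSpace ℂ Y]

/-- `Σ aₖ bₖ` converges to `x` (in the Schauder/partial-sum sense). -/
def ExpandsTo (b : ℕ → X) (a : ℕ → ℂ) (x : X) : Prop :=
  Tendsto (fun N => ∑ k ∈ Finset.range N, a k • b k) atTop (nhds x)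

/-- The series `Σ aₖ bₖ` converges. -/
def ConvergesWith (b : ℕ → X) (a : ℕ → ℂ) : Prop := ∃ x, ExpandsTo b a x

/-- `b` is a Schauder basis of `X`. -/
def IsSchauderBasis (b : ℕ → X) : Prop := ∀ x : X, ∃! a : ℕ → ℂ, ExpandsTo b a x

/-- `b` is a basic sequence: a Schauder basis of its closed linear span. -/
def IsBasicSeq (b : ℕ → X) : Prop :=
  ∀ x ∈ (Submodule.span ℂ (Set.range b)).topologicalClosure,
    ∃! a : ℕ → ℂ, ExpandsTo b a x

/-- Two basic sequences are equivalent: the same coefficient sequences give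
convergent series. -/
def EquivSeq (b : ℕ → X) (c : ℕ → Y) : Prop :=
  ∀ a : ℕ → ℂ, ConvergesWith b a ↔ ConvergesWith c a

/-- An unconditional (Schauder) basis. -/
def IsUnconditionalBasis (b : ℕ → X) : Prop :=
  IsSchauderBasis b ∧ ∀ (a : ℕ → ℂ) (x : X), ExpandsTo b a x →
    ∀ π : Equiv.Perm ℕ, ConvergesWith (fun k => b (π k)) (fun k => a (π k))

/-- `T` is bounded below on the subspace `M`. -/
def BoundedBelowOn (T : X →L[ℂ] Y) (M : Submodule ℂ X) : Prop :=
  ∃ c > 0, ∀ x ∈ M, c * ‖x‖ ≤ ‖T x‖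

/-- Strictly singular operator: bounded below on no infinite-dimensional closed
subspace. -/
def StrictlySingular (T : X →L[ℂ] Y) : Prop :=
  ∀ M : Submodule ℂ X, IsClosed (M : Set X) → ¬ FiniteDimensional ℂ M →
    ¬ BoundedBelowOn T M

/-- Strictly cosingular operator: composing with the quotient map by any closed
infinite-codimensional subspace is never surjective. -/
def StrictlyCosingular (T : X →L[ℂ] Y) : Prop :=
  ∀ N : Submodule ℂ Y, IsClosed (N : Set Y) → ¬ FiniteDimensional ℂ (Y ⧸ N) →
    ¬ Function.Surjective (fun x => N.mkQ (T x))

end Ops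

/-- The restriction of `a` to the interval `[p, q)`. -/
def truncI (a : ℕ → ℂ) (p q : ℕ) : ℕ → ℂ := fun i => if p ≤ i ∧ i < q then a i else 0

/-- The series `Σ aₖ eₖ` converges in `Dom_{n+1}` (Cauchy criterion with respect
to the natural quasinorm; equivalent to norm convergence since `Dom_{n+1}` is
complete and its norm is equivalent to the quasinorm). -/
def DomConverges (n : ℕ) (a : ℕ → ℂ) : Prop :=
  ∀ ε > 0, ∃ N : ℕ, ∀ p q : ℕ, N ≤ p → p ≤ q → DomQnorm n (truncI a p q) < ε

/-- `ωₙ(x) = sup { |⟨x,y⟩ₙ| : y finitely supported, ‖y‖ ≤ 1 }`. -/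
def omegaZ {n : ℕ} {Z : Type*} [NormedAddCommGroup Z] [NormedSpace ℂ Z]
    (e : RochbergRep n Z) (x : Z) : ℝ :=
  sSup { r : ℝ | ∃ y : Z, FinSuppZ n (e.toFun y) ∧ ‖y‖ ≤ 1 ∧
    r = ‖pairZ n (e.toFun x) (e.toFun y)‖ }

/-- The left shift `(x₁,…,xₙ) ↦ (x₂,…,xₙ,0)` on tuples. -/
def shiftTuple (m : ℕ) (x : Fin (m + 2) → ℕ → ℂ) : Fin (m + 2) → ℕ → ℂ :=
  fun j => if h : (j : ℕ) + 1 < m + 2 then x ⟨(j : ℕ) + 1, h⟩ else 0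

/-- Embedding on the left by padding with zeros on the right:
`(y₁,…,y_{k+1}) ↦ (y₁,…,y_{k+1},0,…,0)`. -/
def iotaTuple (n k : ℕ) (y : Fin (k + 1) → ℕ → ℂ) : Fin (n + 1) → ℕ → ℂ :=
  fun j => if h : (j : ℕ) < k + 1 then y ⟨(j : ℕ), h⟩ else 0

/-- Projection onto the last `k+1` coordinates. -/
def piTuple (n k : ℕ) (hk : k ≤ n) (x : Fin (n + 1) → ℕ → ℂ) : Fin (k + 1) → ℕ → ℂ :=
  fun j => x ⟨n - k + (j : ℕ), by have := j.isLt; omega⟩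


lemma expA (m : ℕ) (hm : 1 ≤ m) {s : ℝ} (hs : 0 ≤ s) :
    2 * (s ^ m / m.factorial) ≤ Real.exp s := by
  obtain ⟨j, rfl⟩ : ∃ j, m = j + 1 := ⟨m - 1, (Nat.succ_pred_eq_of_pos hm).symm⟩
  have h := Real.sum_le_exp_of_nonneg hs (j + 3)
  rw [Finset.sum_range_succ, Finset.sum_range_succ, Finset.sum_range_succ] at h
  have h0 : (0:ℝ) ≤ ∑ i ∈ Finset.range j, s ^ i / i.factorial :=
    Finset.sum_nonneg fun i _ => div_nonneg (pow_nonneg hs _) (by positivity)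
  have hf1 : ((j+1).factorial : ℝ) = ((j:ℝ)+1) * j.factorial := by
    rw [Nat.factorial_succ]; push_cast; ring
  have hf2 : ((j+2).factorial : ℝ) = ((j:ℝ)+2) * (((j:ℝ)+1) * j.factorial) := by
    rw [Nat.factorial_succ, Nat.factorial_succ]; push_cast; ring
  have hp1 : s ^ (j+1) = s ^ j * s := pow_succ s j
  have hp2 : s ^ (j+2) = s ^ j * s * s := by rw [pow_succ, hp1]
  have hjf : (0:ℝ) < j.factorial := by positivity
  have hpj : (0:ℝ) ≤ s ^ j := pow_nonneg hs _
  have hd2 : (0:ℝ) < ((j:ℝ)+2) * (((j:ℝ)+1) * (j.factorial:ℝ)) := by positivity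
  rw [hf1, hp1]
  rw [hf1, hf2, hp1, hp2] at h
  have hc : (0:ℝ) ≤ s^j * (4*((j:ℝ)+1)*((j:ℝ)+2) - ((j:ℝ)+2)^2) :=
    mul_nonneg hpj (by nlinarith)
  have key2 : 2 * (s^j*s/(((j:ℝ)+1)*(j.factorial:ℝ)))
      ≤ s^j/(j.factorial:ℝ) + s^j*s/(((j:ℝ)+1)*(j.factorial:ℝ))
        + s^j*s*s/(((j:ℝ)+2)*(((j:ℝ)+1)*(j.factorial:ℝ))) := by
    rw [← sub_nonneg]
    have hrw : s^j/(j.factorial:ℝ) + s^j*s/(((j:ℝ)+1)*(j.factorial:ℝ))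
        + s^j*s*s/(((j:ℝ)+2)*(((j:ℝ)+1)*(j.factorial:ℝ)))
        - 2 * (s^j*s/(((j:ℝ)+1)*(j.factorial:ℝ)))
        = (s^j*(((j:ℝ)+1)*((j:ℝ)+2)) - s^j*s*((j:ℝ)+2) + s^j*s*s)
          / (((j:ℝ)+2)*(((j:ℝ)+1)*(j.factorial:ℝ))) := by
      field_simp
      ring
    rw [hrw]
    apply div_nonneg _ (le_of_lt hd2)
    nlinarith [mul_nonneg hpj (sq_nonneg (2*s - ((j:ℝ)+2))), hc]
  calc 2 * (s ^ j * s / (((j:ℝ)+1) * (j.factorial:ℝ)))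
      ≤ s^j/(j.factorial:ℝ) + s^j*s/(((j:ℝ)+1)*(j.factorial:ℝ))
        + s^j*s*s/(((j:ℝ)+2)*(((j:ℝ)+1)*(j.factorial:ℝ))) := key2
    _ ≤ Real.exp s := by linarith

lemma kpIneq (m : ℕ) {a b : ℝ} (ha : 0 < a) (hb : 0 < b) :
    a * b * |Real.log a - Real.log b| ^ m / m.factorial ≤ (a ^ 2 + b ^ 2) / 2 := by
  have main : ∀ a b : ℝ, 0 < a → 0 < b → b ≤ a →
      a * b * |Real.log a - Real.log b| ^ m / m.factorial ≤ (a ^ 2 + b ^ 2) / 2 := by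
    intro a b ha hb hba
    have hs : 0 ≤ Real.log a - Real.log b := sub_nonneg.2 (Real.log_le_log hb hba)
    rw [abs_of_nonneg hs]
    rcases Nat.eq_zero_or_pos m with hm | hm
    · subst hm; simp only [pow_zero, Nat.factorial_zero, Nat.cast_one, div_one, mul_one]
      nlinarith [sq_nonneg (a - b)]
    · have hexp : Real.exp (Real.log a - Real.log b) = a / b := by
        rw [Real.exp_sub, Real.exp_log ha, Real.exp_log hb]
      have h2 := expA m hm hs
      rw [hexp] at h2
      have h3 : a * b * ((Real.log a - Real.log b) ^ m / m.factorial) ≤ a * b * (a / b / 2) := by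
        apply mul_le_mul_of_nonneg_left _ (by positivity)
        linarith
      have heq : a * b * (a / b / 2) = a ^ 2 / 2 := by field_simp
      rw [heq] at h3
      calc a * b * (Real.log a - Real.log b) ^ m / m.factorial
          = a * b * ((Real.log a - Real.log b) ^ m / m.factorial) := by ring
        _ ≤ a ^ 2 / 2 := h3
        _ ≤ (a ^ 2 + b ^ 2) / 2 := by nlinarith [sq_nonneg b]
  rcases le_total b a with h | h
  · exact main a b ha hb h
  · have := main b a hb ha h
    rw [abs_sub_comm, mul_comm b a] at this
    linarith

lemma binomId (m : ℕ) (L M : ℝ) :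
    ∑ k ∈ Finset.range (m + 1),
      (-1:ℝ) ^ k * (2 ^ (m - k) / (m - k).factorial * L ^ (m - k))
        * (2 ^ k / k.factorial * M ^ k)
      = 2 ^ m / m.factorial * (L - M) ^ m := by
  have hb := add_pow (-M) L m
  have hLM : (L - M) ^ m = (-M + L) ^ m := by ring_nf
  rw [hLM, hb, Finset.mul_sum]
  apply Finset.sum_congr rfl
  intro k hk
  have hkm : k ≤ m := Nat.lt_succ_iff.mp (Finset.mem_range.mp hk)
  have h2 : (2:ℝ) ^ (m - k) * 2 ^ k = 2 ^ m := pow_sub_mul_pow 2 hkm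
  rw [Nat.cast_choose ℝ hkm, neg_pow, ← h2]
  have hfk : ((k.factorial:ℝ)) ≠ 0 := by positivity
  have hfmk : (((m-k).factorial:ℝ)) ≠ 0 := by positivity
  have hfm : ((m.factorial:ℝ)) ≠ 0 := by positivity
  field_simp
  ring

lemma KP_of_zero (k : ℕ) (y : ℕ → ℂ) (i : ℕ) (h : y i = 0) : KP k y i = 0 := by
  unfold KP
  exact if_pos (Or.inr h)

lemma KP_of_ne (k : ℕ) (y : ℕ → ℂ) (i : ℕ) (hy : y ≠ 0) (h : y i ≠ 0) :
    KP k y i = (((2 : ℝ) ^ k / (Nat.factorial k : ℝ) *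
      (Real.log (‖y i‖ / l2norm y)) ^ k : ℝ) : ℂ) * y i := by
  unfold KP
  exact if_neg (by push_neg; exact ⟨hy, h⟩)

lemma l2_facts (y : ℕ → ℂ) (hy : y ≠ 0) (hfy : (Function.support y).Finite) :
    0 < l2norm y ∧ (l2norm y) ^ 2 = ∑ i ∈ hfy.toFinset, ‖y i‖ ^ 2 := by
  have hsum_eq : ∑' i, ‖y i‖ ^ 2 = ∑ i ∈ hfy.toFinset, ‖y i‖ ^ 2 := by
    apply tsum_eq_sum
    intro b hb
    rw [Set.Finite.mem_toFinset, Function.mem_support, not_not] at hb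
    simp [hb]
  obtain ⟨i0, hi0'⟩ := Function.ne_iff.mp hy
  have hi0 : y i0 ≠ 0 := by simpa using hi0'
  have hpos : 0 < ∑ i ∈ hfy.toFinset, ‖y i‖ ^ 2 := by
    apply Finset.sum_pos' (fun i _ => by positivity)
    exact ⟨i0, by rw [Set.Finite.mem_toFinset, Function.mem_support]; exact hi0,
      by simpa using pow_pos (norm_pos_iff.2 hi0) 2⟩
  have hdef : l2norm y = Real.sqrt (∑' i, ‖y i‖ ^ 2) := rfl
  constructor
  · rw [hdef, Real.sqrt_pos, hsum_eq]; exact hpos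
  · rw [hdef, Real.sq_sqrt (tsum_nonneg fun i => by positivity), hsum_eq]

/-- For every `n ≥ 1` and nonzero finitely supported
`x, x' ∈ ℓ²`:
`|Σ_{k=0}^{n−1} (−1)^k Σ_i (KP^{n−1−k} x)(i)·(KP^k x')(i)| ≤ 2^{n−1}·‖x‖₂·‖x'‖₂`. -/
theorem kp_pairing_bound (n : ℕ) (hn : 1 ≤ n) (x x' : ℕ → ℂ)
    (hx : x ≠ 0) (hx' : x' ≠ 0)
    (hfx : (Function.support x).Finite) (hfx' : (Function.support x').Finite) :
    ‖∑ k ∈ Finset.range n,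
        (-1 : ℂ) ^ k * ∑ᶠ i, KP (n - 1 - k) x i * KP k x' i‖
      ≤ 2 ^ (n - 1) * l2norm x * l2norm x' := by
  obtain ⟨m, rfl⟩ : ∃ m, n = m + 1 := ⟨n - 1, (Nat.succ_pred_eq_of_pos hn).symm⟩
  simp only [Nat.add_sub_cancel]
  obtain ⟨hN, hN2⟩ := l2_facts x hx hfx
  obtain ⟨hN', hN2'⟩ := l2_facts x' hx' hfx'
  set N := l2norm x
  set N' := l2norm x'
  set S : Finset ℕ := hfx.toFinset ∩ hfx'.toFinset with hS
  have hmemS : ∀ i, i ∈ S ↔ x i ≠ 0 ∧ x' i ≠ 0 := by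
    intro i
    simp [hS, Set.Finite.mem_toFinset, Function.mem_support]
  -- replace finsum by finset sum
  have hfin : ∀ k, ∑ᶠ i, KP (m - k) x i * KP k x' i = ∑ i ∈ S, KP (m - k) x i * KP k x' i := by
    intro k
    apply finsum_eq_sum_of_support_subset
    intro i hi
    rw [Function.mem_support] at hi
    rw [Finset.coe_inter, Set.mem_inter_iff, Set.Finite.coe_toFinset, Set.Finite.coe_toFinset]
    constructor
    · by_contra h
      rw [Function.mem_support, not_not] at h
      exact hi (by rw [KP_of_zero _ _ _ h, zero_mul])
    · by_contra h
      rw [Function.mem_support, not_not] at h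
      exact hi (by rw [KP_of_zero _ _ _ h, mul_zero])
  -- main algebraic identity
  have hrep : ∑ k ∈ Finset.range (m + 1), (-1 : ℂ) ^ k * ∑ᶠ i, KP (m - k) x i * KP k x' i
      = ∑ i ∈ S, (((2:ℝ) ^ m / m.factorial *
          (Real.log (‖x i‖ / N) - Real.log (‖x' i‖ / N')) ^ m : ℝ) : ℂ) * (x i * x' i) := by
    simp_rw [hfin, Finset.mul_sum]
    rw [Finset.sum_comm]
    apply Finset.sum_congr rfl
    intro i hi
    obtain ⟨hxi, hx'i⟩ := (hmemS i).mp hi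
    have e1 : ∀ k, KP k x i = (((2:ℝ) ^ k / k.factorial *
        (Real.log (‖x i‖ / N)) ^ k : ℝ) : ℂ) * x i := fun k => KP_of_ne k x i hx hxi
    have e2 : ∀ k, KP k x' i = (((2:ℝ) ^ k / k.factorial *
        (Real.log (‖x' i‖ / N')) ^ k : ℝ) : ℂ) * x' i := fun k => KP_of_ne k x' i hx' hx'i
    calc ∑ k ∈ Finset.range (m + 1), (-1 : ℂ) ^ k * (KP (m - k) x i * KP k x' i)
        = ∑ k ∈ Finset.range (m + 1),
            (((-1:ℝ) ^ k * ((2:ℝ) ^ (m - k) / (m - k).factorial *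
              (Real.log (‖x i‖ / N)) ^ (m - k)) *
              ((2:ℝ) ^ k / k.factorial * (Real.log (‖x' i‖ / N')) ^ k) : ℝ) : ℂ)
            * (x i * x' i) := by
          apply Finset.sum_congr rfl
          intro k _
          rw [e1, e2]
          push_cast
          ring
      _ = (((∑ k ∈ Finset.range (m + 1),
            (-1:ℝ) ^ k * ((2:ℝ) ^ (m - k) / (m - k).factorial *
              (Real.log (‖x i‖ / N)) ^ (m - k)) *
              ((2:ℝ) ^ k / k.factorial * (Real.log (‖x' i‖ / N')) ^ k) : ℝ)) : ℂ)
            * (x i * x' i) := by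
          rw [Complex.ofReal_sum, Finset.sum_mul]
      _ = _ := by rw [binomId]
  rw [hrep]
  -- bound
  calc ‖∑ i ∈ S, (((2:ℝ) ^ m / m.factorial *
          (Real.log (‖x i‖ / N) - Real.log (‖x' i‖ / N')) ^ m : ℝ) : ℂ) * (x i * x' i)‖
      ≤ ∑ i ∈ S, ‖(((2:ℝ) ^ m / m.factorial *
          (Real.log (‖x i‖ / N) - Real.log (‖x' i‖ / N')) ^ m : ℝ) : ℂ) * (x i * x' i)‖ :=
        norm_sum_le _ _
    _ ≤ ∑ i ∈ S, 2 ^ m * N * N' * (((‖x i‖ / N) ^ 2 + (‖x' i‖ / N') ^ 2) / 2) := by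
        apply Finset.sum_le_sum
        intro i hi
        obtain ⟨hxi, hx'i⟩ := (hmemS i).mp hi
        have ha : 0 < ‖x i‖ / N := div_pos (norm_pos_iff.2 hxi) hN
        have hb : 0 < ‖x' i‖ / N' := div_pos (norm_pos_iff.2 hx'i) hN'
        have hkey := kpIneq m ha hb
        have habs : ‖(((2:ℝ) ^ m / m.factorial *
            (Real.log (‖x i‖ / N) - Real.log (‖x' i‖ / N')) ^ m : ℝ) : ℂ) * (x i * x' i)‖
            = (2:ℝ) ^ m / m.factorial *
              |Real.log (‖x i‖ / N) - Real.log (‖x' i‖ / N')| ^ m * (‖x i‖ * ‖x' i‖) := by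
          rw [norm_mul, norm_mul, Complex.norm_real, Real.norm_eq_abs, abs_mul, abs_pow,
            abs_of_nonneg (by positivity : (0:ℝ) ≤ (2:ℝ) ^ m / m.factorial)]
        rw [habs]
        set t := |Real.log (‖x i‖ / N) - Real.log (‖x' i‖ / N')| ^ m with ht
        have h5 : (2:ℝ) ^ m / m.factorial * t * (‖x i‖ * ‖x' i‖)
            = 2 ^ m * N * N' * ((‖x i‖ / N) * (‖x' i‖ / N') * t / m.factorial) := by
          have hmf : ((m.factorial : ℝ)) ≠ 0 := by positivity
          field_simp
        rw [h5]
        exact mul_le_mul_of_nonneg_left hkey (by positivity)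
    _ ≤ 2 ^ m * N * N' := by
        rw [← Finset.mul_sum]
        have hA : ∑ i ∈ S, (‖x i‖ / N) ^ 2 ≤ 1 := by
          have e : ∑ i ∈ S, (‖x i‖ / N) ^ 2 = (∑ i ∈ S, ‖x i‖ ^ 2) / N ^ 2 := by
            rw [Finset.sum_div]
            exact Finset.sum_congr rfl fun i _ => div_pow _ _ _
          rw [e, div_le_one (by positivity), hN2]
          exact Finset.sum_le_sum_of_subset_of_nonneg (Finset.inter_subset_left)
            (fun i _ _ => by positivity)
        have hB : ∑ i ∈ S, (‖x' i‖ / N') ^ 2 ≤ 1 := by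
          have e : ∑ i ∈ S, (‖x' i‖ / N') ^ 2 = (∑ i ∈ S, ‖x' i‖ ^ 2) / N' ^ 2 := by
            rw [Finset.sum_div]
            exact Finset.sum_congr rfl fun i _ => div_pow _ _ _
          rw [e, div_le_one (by positivity), hN2']
          exact Finset.sum_le_sum_of_subset_of_nonneg (Finset.inter_subset_right)
            (fun i _ _ => by positivity)
        have hsplit : ∑ i ∈ S, (((‖x i‖ / N) ^ 2 + (‖x' i‖ / N') ^ 2) / 2)
            = (∑ i ∈ S, (‖x i‖ / N) ^ 2 + ∑ i ∈ S, (‖x' i‖ / N') ^ 2) / 2 := by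
          rw [← Finset.sum_add_distrib, Finset.sum_div]
        have h1 : ∑ i ∈ S, (((‖x i‖ / N) ^ 2 + (‖x' i‖ / N') ^ 2) / 2) ≤ 1 := by
          rw [hsplit]; linarith
        calc 2 ^ m * N * N' * ∑ i ∈ S, (((‖x i‖ / N) ^ 2 + (‖x' i‖ / N') ^ 2) / 2)
            ≤ 2 ^ m * N * N' * 1 := mul_le_mul_of_nonneg_left h1 (by positivity)
          _ = 2 ^ m * N * N' := mul_one _
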